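/- For the reaction 2X₁ + X₂ ↔ 2X₃ with conservation matrix A = [[1,0,1],[0,2,1]], the conditional factorial moment identity gives: for independent Poisson X₁,X₂,X₃ with rates λ₁,λ₂,λ₃, Y₁ = X₁+X₃, Y₂ = 2X₂+X₃, and b₁ ≥ 1, b₂ ≥ 2, E[X₂ | Y=b] = λ₂ · F₀(b₁, b₂-2)/F₀(b₁,b₂) whenever P(Y=b)>0, where F₀(b₁,b₂) = Σ_{k₁+k₃=b₁, 2k₂+k₃=b₂} λ₁^{k₁}λ₂^{k₂}λ₃^{k₃}/(k₁!k₂!k₃!). -/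

import Mathlib

open MeasureTheory ProbabilityTheory Real
open scoped BigOperators

/-- For `A = [[1,0,1],[0,2,1]]`,
`F₀(b₁,b₂) = Σ_{k₁+k₃=b₁, 2k₂+k₃=b₂} λ₁^{k₁}λ₂^{k₂}λ₃^{k₃}/(k₁!k₂!k₃!)`. -/
noncomputable def F0water (lam1 lam2 lam3 : ℝ) (b₁ b₂ : ℕ) : ℝ :=
  ∑' k : ℕ × ℕ × ℕ,
    if k.1 + k.2.2 = b₁ ∧ 2 * k.2.1 + k.2.2 = b₂ then
      lam1 ^ k.1 * lam2 ^ k.2.1 * lam3 ^ k.2.2 /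
        (Nat.factorial k.1 * Nat.factorial k.2.1 * Nat.factorial k.2.2)
    else 0

namespace F0waterAux

/-- The Poisson product weight (without the exponential factor). -/
noncomputable def qw (lam1 lam2 lam3 : ℝ) (k : ℕ × ℕ × ℕ) : ℝ :=
  lam1 ^ k.1 * lam2 ^ k.2.1 * lam3 ^ k.2.2 /
    (Nat.factorial k.1 * Nat.factorial k.2.1 * Nat.factorial k.2.2)

lemma qw_nonneg {lam1 lam2 lam3 : ℝ} (h1 : 0 < lam1) (h2 : 0 < lam2) (h3 : 0 < lam3)
    (k : ℕ × ℕ × ℕ) : 0 ≤ qw lam1 lam2 lam3 k := by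
  refine div_nonneg (by positivity) ?_
  have a := (Nat.factorial k.1).cast_nonneg (α := ℝ)
  have b := (Nat.factorial k.2.1).cast_nonneg (α := ℝ)
  have c := (Nat.factorial k.2.2).cast_nonneg (α := ℝ)
  exact mul_nonneg (mul_nonneg a b) c

set_option maxHeartbeats 1000000 in
lemma qw_summable {lam1 lam2 lam3 : ℝ} (h1 : 0 < lam1) (h2 : 0 < lam2) (h3 : 0 < lam3) :
    Summable (qw lam1 lam2 lam3) := by
  have s1 := Real.summable_pow_div_factorial lam1
  have s2 := Real.summable_pow_div_factorial lam2
  have s3 := Real.summable_pow_div_factorial lam3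
  have h23 : Summable (fun k : ℕ × ℕ =>
      (lam2 ^ k.1 / Nat.factorial k.1) * (lam3 ^ k.2 / Nat.factorial k.2)) :=
    s2.mul_of_nonneg s3 (fun n => by positivity) (fun n => by positivity)
  have h123 : Summable (fun k : ℕ × ℕ × ℕ =>
      (lam1 ^ k.1 / Nat.factorial k.1) *
        ((lam2 ^ k.2.1 / Nat.factorial k.2.1) * (lam3 ^ k.2.2 / Nat.factorial k.2.2))) :=
    s1.mul_of_nonneg h23 (fun n => by positivity) (fun n => by positivity)
  refine h123.congr fun k => ?_
  unfold qw
  rw [div_mul_div_comm, div_mul_div_comm]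
  congr 1 <;> ring

lemma F0water_eq (lam1 lam2 lam3 : ℝ) (b₁ b₂ : ℕ) :
    F0water lam1 lam2 lam3 b₁ b₂ =
      ∑' k : ℕ × ℕ × ℕ,
        Set.indicator {k : ℕ × ℕ × ℕ | k.1 + k.2.2 = b₁ ∧ 2 * k.2.1 + k.2.2 = b₂}
          (qw lam1 lam2 lam3) k := by
  unfold F0water
  refine tsum_congr fun k => ?_
  by_cases h : k.1 + k.2.2 = b₁ ∧ 2 * k.2.1 + k.2.2 = b₂ <;>
    simp [Set.indicator_apply, h, qw]

/-- The key shift identity. -/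
lemma shift_sum {lam1 lam2 lam3 : ℝ} (h1 : 0 < lam1) (h2 : 0 < lam2) (h3 : 0 < lam3)
    (b₁ b₂ : ℕ) (hb₂ : 2 ≤ b₂) :
    ∑' k : ℕ × ℕ × ℕ,
        (qw lam1 lam2 lam3 k) *
          Set.indicator {k : ℕ × ℕ × ℕ | k.1 + k.2.2 = b₁ ∧ 2 * k.2.1 + k.2.2 = b₂}
            (fun k => (k.2.1 : ℝ)) k
      = lam2 * F0water lam1 lam2 lam3 b₁ (b₂ - 2) := by
  classical
  set T : Set (ℕ × ℕ × ℕ) := {k | k.1 + k.2.2 = b₁ ∧ 2 * k.2.1 + k.2.2 = b₂} with hT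
  set f : ℕ × ℕ × ℕ → ℝ :=
    fun k => (qw lam1 lam2 lam3 k) * T.indicator (fun k => (k.2.1 : ℝ)) k with hf
  have hj : Function.Injective (fun k : ℕ × ℕ × ℕ => (k.1, k.2.1 + 1, k.2.2)) := by
    rintro ⟨a1, a2, a3⟩ ⟨c1, c2, c3⟩ hab
    simp only [Prod.mk.injEq] at hab ⊢
    omega
  have hsupp : Function.support f ⊆
      Set.range (fun k : ℕ × ℕ × ℕ => (k.1, k.2.1 + 1, k.2.2)) := by
    rintro ⟨a, b, c⟩ hk
    rcases Nat.eq_zero_or_pos b with h0 | h0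
    · exfalso
      apply hk
      by_cases hkT : ((a, b, c) : ℕ × ℕ × ℕ) ∈ T <;>
        simp [hf, Set.indicator_apply, hkT, h0]
    · refine ⟨(a, b - 1, c), ?_⟩
      have hb1 : b - 1 + 1 = b := by omega
      show ((a, b - 1 + 1, c) : ℕ × ℕ × ℕ) = (a, b, c)
      rw [hb1]
  rw [← hj.tsum_eq hsupp]
  have hterm : ∀ k : ℕ × ℕ × ℕ,
      f (k.1, k.2.1 + 1, k.2.2) =
        lam2 * (Set.indicator {k : ℕ × ℕ × ℕ | k.1 + k.2.2 = b₁ ∧ 2 * k.2.1 + k.2.2 = b₂ - 2}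
          (qw lam1 lam2 lam3) k) := by
    rintro ⟨a, b, c⟩
    by_cases hc : a + c = b₁ ∧ 2 * b + c = b₂ - 2
    · have hTm : ((a, b + 1, c) : ℕ × ℕ × ℕ) ∈ T := by
        simp only [hT, Set.mem_setOf_eq]
        omega
      rw [hf]
      simp only [Set.indicator_of_mem hTm,
        Set.indicator_of_mem (show ((a, b, c) : ℕ × ℕ × ℕ) ∈
          {k : ℕ × ℕ × ℕ | k.1 + k.2.2 = b₁ ∧ 2 * k.2.1 + k.2.2 = b₂ - 2} from hc)]
      have ha : (Nat.factorial a : ℝ) ≠ 0 := Nat.cast_ne_zero.mpr (Nat.factorial_ne_zero _)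
      have hbf : (Nat.factorial b : ℝ) ≠ 0 := Nat.cast_ne_zero.mpr (Nat.factorial_ne_zero _)
      have hcc : (Nat.factorial c : ℝ) ≠ 0 := Nat.cast_ne_zero.mpr (Nat.factorial_ne_zero _)
      unfold qw
      simp only [Nat.factorial_succ, pow_succ]
      push_cast
      field_simp
    · have hTm : ((a, b + 1, c) : ℕ × ℕ × ℕ) ∉ T := by
        simp only [hT, Set.mem_setOf_eq]
        omega
      rw [hf]
      simp only [Set.indicator_of_notMem hTm,
        Set.indicator_of_notMem (show ((a, b, c) : ℕ × ℕ × ℕ) ∉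
          {k : ℕ × ℕ × ℕ | k.1 + k.2.2 = b₁ ∧ 2 * k.2.1 + k.2.2 = b₂ - 2} from hc),
        mul_zero]
  calc ∑' k : ℕ × ℕ × ℕ, f (k.1, k.2.1 + 1, k.2.2)
      = ∑' k : ℕ × ℕ × ℕ, lam2 *
          (Set.indicator {k : ℕ × ℕ × ℕ | k.1 + k.2.2 = b₁ ∧ 2 * k.2.1 + k.2.2 = b₂ - 2}
            (qw lam1 lam2 lam3) k) := tsum_congr hterm
    _ = lam2 * F0water lam1 lam2 lam3 b₁ (b₂ - 2) := by
        rw [tsum_mul_left, F0water_eq]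

end F0waterAux

/-- For independent Poisson `X₁,X₂,X₃` with `Y₁ = X₁+X₃`, `Y₂ = 2X₂+X₃`,
`b₁ ≥ 1`, `b₂ ≥ 2` and `P(Y=b) > 0`,
`E[X₂ | Y=b] = λ₂ F₀(b₁, b₂-2)/F₀(b₁,b₂)`. -/
theorem conditional_mean_water
    {Ω : Type*} [MeasurableSpace Ω] (μ : Measure Ω) [IsProbabilityMeasure μ]
    (X1 X2 X3 : Ω → ℕ) (hm1 : Measurable X1) (hm2 : Measurable X2) (hm3 : Measurable X3)
    (lam1 lam2 lam3 : ℝ) (h1 : 0 < lam1) (h2 : 0 < lam2) (h3 : 0 < lam3)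
    (hindep : iIndepFun ![X1, X2, X3] μ)
    (hX1 : ∀ k : ℕ, μ (X1 ⁻¹' {k}) =
      ENNReal.ofReal (Real.exp (-lam1) * lam1 ^ k / Nat.factorial k))
    (hX2 : ∀ k : ℕ, μ (X2 ⁻¹' {k}) =
      ENNReal.ofReal (Real.exp (-lam2) * lam2 ^ k / Nat.factorial k))
    (hX3 : ∀ k : ℕ, μ (X3 ⁻¹' {k}) =
      ENNReal.ofReal (Real.exp (-lam3) * lam3 ^ k / Nat.factorial k))
    (b₁ b₂ : ℕ) (hb₁ : 1 ≤ b₁) (hb₂ : 2 ≤ b₂)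
    (hpos : 0 < μ {ω | X1 ω + X3 ω = b₁ ∧ 2 * X2 ω + X3 ω = b₂}) :
    ∫ ω, ((X2 ω : ℝ)) ∂(μ[|{ω | X1 ω + X3 ω = b₁ ∧ 2 * X2 ω + X3 ω = b₂}]) =
      lam2 * F0water lam1 lam2 lam3 b₁ (b₂ - 2) / F0water lam1 lam2 lam3 b₁ b₂ := by
  classical
  set X : Ω → ℕ × ℕ × ℕ := fun ω => (X1 ω, X2 ω, X3 ω) with hX
  have hmX : Measurable X := hm1.prodMk (hm2.prodMk hm3)
  set T : Set (ℕ × ℕ × ℕ) := {k | k.1 + k.2.2 = b₁ ∧ 2 * k.2.1 + k.2.2 = b₂} with hT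
  have hTmeas : MeasurableSet T := (Set.to_countable T).measurableSet
  have hEeq : {ω | X1 ω + X3 ω = b₁ ∧ 2 * X2 ω + X3 ω = b₂} = X ⁻¹' T := rfl
  set C : ℝ := Real.exp (-lam1) * Real.exp (-lam2) * Real.exp (-lam3) with hC
  have hCpos : 0 < C := by positivity
  have hqnn : ∀ k, 0 ≤ F0waterAux.qw lam1 lam2 lam3 k := F0waterAux.qw_nonneg h1 h2 h3
  -- measure of each singleton fiber
  have hsing : ∀ k : ℕ × ℕ × ℕ, μ (X ⁻¹' {k}) =
      ENNReal.ofReal (C * F0waterAux.qw lam1 lam2 lam3 k) := by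
    intro k
    have hprod : μ (X ⁻¹' {k}) =
        μ (X1 ⁻¹' {k.1}) * μ (X2 ⁻¹' {k.2.1}) * μ (X3 ⁻¹' {k.2.2}) := by
      have h := hindep.measure_inter_preimage_eq_mul Finset.univ
        (sets := ![{k.1}, {k.2.1}, {k.2.2}]) (by
          intro i _
          fin_cases i <;> exact measurableSet_singleton _)
      simp only [Finset.mem_univ, Set.iInter_true, Fin.prod_univ_three] at h
      have hE : X ⁻¹' {k} =
          ⋂ i, (![X1, X2, X3] : Fin 3 → Ω → ℕ) i ⁻¹'
            (![{k.1}, {k.2.1}, {k.2.2}] : Fin 3 → Set ℕ) i := by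
        ext ω
        simp [hX, Fin.forall_fin_succ, Prod.ext_iff, Matrix.cons_val_zero, Matrix.cons_val_one,
          Matrix.head_cons, Fin.forall_fin_two]
      rw [hE, h]
      simp [Matrix.cons_val_zero, Matrix.cons_val_one, Matrix.head_cons]
    rw [hprod, hX1, hX2, hX3, ← ENNReal.ofReal_mul (by positivity),
      ← ENNReal.ofReal_mul (by positivity)]
    congr 1
    have ha : (Nat.factorial k.1 : ℝ) ≠ 0 := Nat.cast_ne_zero.mpr (Nat.factorial_ne_zero _)
    have hb : (Nat.factorial k.2.1 : ℝ) ≠ 0 := Nat.cast_ne_zero.mpr (Nat.factorial_ne_zero _)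
    have hc : (Nat.factorial k.2.2 : ℝ) ≠ 0 := Nat.cast_ne_zero.mpr (Nat.factorial_ne_zero _)
    unfold F0waterAux.qw
    rw [hC]
    field_simp
  -- measure of the conditioning event
  have hμE : μ (X ⁻¹' T) = ENNReal.ofReal (C * F0water lam1 lam2 lam3 b₁ b₂) := by
    rw [← tsum_measure_preimage_singleton (Set.to_countable T)
      (fun y _ => hmX (measurableSet_singleton y))]
    have hsum : Summable (fun b : T => C * F0waterAux.qw lam1 lam2 lam3 (b : ℕ × ℕ × ℕ)) :=
      (((F0waterAux.qw_summable h1 h2 h3).mul_left C).subtype T)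
    calc ∑' b : T, μ (X ⁻¹' {(b : ℕ × ℕ × ℕ)})
        = ∑' b : T, ENNReal.ofReal (C * F0waterAux.qw lam1 lam2 lam3 (b : ℕ × ℕ × ℕ)) :=
          tsum_congr fun b => hsing b
      _ = ENNReal.ofReal (∑' b : T, C * F0waterAux.qw lam1 lam2 lam3 (b : ℕ × ℕ × ℕ)) := by
          rw [ENNReal.ofReal_tsum_of_nonneg (fun b => mul_nonneg hCpos.le (hqnn _)) hsum]
      _ = ENNReal.ofReal (C * F0water lam1 lam2 lam3 b₁ b₂) := by
          congr 1
          rw [tsum_mul_left, F0waterAux.F0water_eq]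
          congr 1
          exact tsum_subtype T (F0waterAux.qw lam1 lam2 lam3)
  have hFpos : 0 < F0water lam1 lam2 lam3 b₁ b₂ := by
    rw [hEeq, hμE] at hpos
    have := ENNReal.ofReal_pos.mp hpos
    nlinarith
  -- the conditional integral
  rw [hEeq]
  rw [show μ[|X ⁻¹' T] = (μ (X ⁻¹' T))⁻¹ • μ.restrict (X ⁻¹' T) from rfl,
    integral_smul_measure]
  have hEmeas : MeasurableSet (X ⁻¹' T) := hmX hTmeas
  rw [← integral_indicator hEmeas]
  have hind : ((X ⁻¹' T).indicator fun ω => (X2 ω : ℝ)) =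
      fun ω => (T.indicator (fun k : ℕ × ℕ × ℕ => (k.2.1 : ℝ))) (X ω) := by
    funext ω
    by_cases hω : X ω ∈ T <;>
      simp [Set.indicator_apply, hω, hX]
  rw [hind]
  have hg_meas : Measurable (T.indicator (fun k : ℕ × ℕ × ℕ => (k.2.1 : ℝ))) :=
    measurable_of_countable _
  rw [← integral_map hmX.aemeasurable hg_meas.aestronglyMeasurable]
  haveI : IsProbabilityMeasure (Measure.map X μ) := Measure.isProbabilityMeasure_map hmX.aemeasurable
  have hInt : Integrable (T.indicator fun k : ℕ × ℕ × ℕ => (k.2.1 : ℝ)) (Measure.map X μ) := by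
    refine (integrable_const (b₂ : ℝ)).mono' hg_meas.aestronglyMeasurable (ae_of_all _ ?_)
    intro k
    by_cases hk : k ∈ T
    · rw [Set.indicator_of_mem hk]
      rw [Real.norm_eq_abs, abs_of_nonneg (Nat.cast_nonneg _)]
      have hk2 : 2 * k.2.1 + k.2.2 = b₂ := hk.2
      exact_mod_cast Nat.cast_le.mpr (show k.2.1 ≤ b₂ by omega)
    · rw [Set.indicator_of_notMem hk]
      simp
  rw [integral_countable' hInt]
  have hmap : ∀ k : ℕ × ℕ × ℕ, Measure.map X μ {k} =
      ENNReal.ofReal (C * F0waterAux.qw lam1 lam2 lam3 k) := fun k => by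
    rw [Measure.map_apply hmX (measurableSet_singleton k)]; exact hsing k
  have hnum : ∑' k : ℕ × ℕ × ℕ, ((Measure.map X μ) {k}).toReal •
      T.indicator (fun k : ℕ × ℕ × ℕ => (k.2.1 : ℝ)) k =
      C * (lam2 * F0water lam1 lam2 lam3 b₁ (b₂ - 2)) := by
    calc ∑' k : ℕ × ℕ × ℕ, ((Measure.map X μ) {k}).toReal •
          T.indicator (fun k : ℕ × ℕ × ℕ => (k.2.1 : ℝ)) k
        = ∑' k : ℕ × ℕ × ℕ, C * ((F0waterAux.qw lam1 lam2 lam3 k) *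
            T.indicator (fun k : ℕ × ℕ × ℕ => (k.2.1 : ℝ)) k) := by
          refine tsum_congr fun k => ?_
          rw [hmap k, ENNReal.toReal_ofReal (mul_nonneg hCpos.le (hqnn k)), smul_eq_mul]
          ring
      _ = C * (lam2 * F0water lam1 lam2 lam3 b₁ (b₂ - 2)) := by
          rw [tsum_mul_left, F0waterAux.shift_sum h1 h2 h3 b₁ b₂ hb₂]
  simp only [measureReal_def]
  rw [hnum, hμE, ← ENNReal.ofReal_inv_of_pos (mul_pos hCpos hFpos),
    ENNReal.toReal_ofReal (inv_nonneg.mpr (mul_nonneg hCpos.le hFpos.le)), smul_eq_mul]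
  have hF0ne : F0water lam1 lam2 lam3 b₁ b₂ ≠ 0 := ne_of_gt hFpos
  field_simp
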